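/- Fix N ≥ 2 and let F = ℚ(q,t)(x₁,…,x_N) be the field of rational functions in x₁,…,x_N over ℚ(q,t). Define the following ℚ(q,t)-linear operators on F, acting on the right and composing left-to-right (f·(AB) = (f·A)·B): f·T_i = t·f + ((t x_{i+1} − x_i)/(x_{i+1} − x_i))·(f∘s_i − f) for 1 ≤ i < N, where s_i exchanges x_i and x_{i+1}; each T_i is invertible with T_i^{−1} = t^{−1}(T_i + 1 − t); f·τ = f(x_N/q, x₁, …, x_{N−1}); the Cherednik operators ξ_i = t^{1−i} T_{i−1}⋯T_1 τ T_{N−1}^{−1}⋯T_i^{−1} (with empty products interpreted as the identity, so ξ_N = t^{1−N} T_{N−1}⋯T_1 τ); the (q,t)-Dunkl operators f·D_N = (f − f·ξ_N)·x_N^{−1} and D_i = t T_i^{−1} D_{i+1} T_i^{−1} for 1 ≤ i < N; and the Knop–Cherednik operators f·Ξ_i = t^{1−i} ((f·T_{i−1}⋯T_1 τ)·(1 − x_N^{−1}))·T_{N−1}^{−1}⋯T_i^{−1} + f·x_i^{−1}. Then Ξ_i = ξ_i + D_i as operators on F, for every 1 ≤ i ≤ N. -/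

import Mathlib

open Finset MvPolynomial

set_option synthInstance.maxHeartbeats 1000000
set_option maxHeartbeats 1000000

noncomputable section

/-- `ℚ[q,t]`. -/
abbrev Qqt : Type := MvPolynomial (Fin 2) ℚ
/-- The field `ℚ(q,t)`. -/
abbrev Kqt : Type := FractionRing Qqt

/-- The parameter `q ∈ ℚ(q,t)`. -/
def qk : Kqt := algebraMap Qqt Kqt (X 0)
/-- The parameter `t ∈ ℚ(q,t)`. -/
def tk : Kqt := algebraMap Qqt Kqt (X 1)

/-- `ℚ(q,t)[x₁,…,x_N]`. -/
abbrev PolyN (N : ℕ) : Type := MvPolynomial (Fin N) Kqt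
/-- The field `F = ℚ(q,t)(x₁,…,x_N)`. -/
abbrev FN (N : ℕ) : Type := FractionRing (PolyN N)

/-- The variable `x_{i+1}` (0-based `i`) as an element of `F`. -/
def XF {N : ℕ} (i : Fin N) : FN N := algebraMap (PolyN N) (FN N) (X i)
/-- `q` as an element of `F`. -/
def qF (N : ℕ) : FN N := algebraMap (PolyN N) (FN N) (C qk)
/-- `t` as an element of `F`. -/
def tF (N : ℕ) : FN N := algebraMap (PolyN N) (FN N) (C tk)

/-- Clamped element of `Fin N`. -/
def finCl (N : ℕ) (hN : 0 < N) (i : ℕ) : Fin N := ⟨min i (N - 1), by omega⟩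

/-- The automorphism of `F` exchanging the variables `x_i` and `x_j`. -/
def swapF (N : ℕ) (a b : Fin N) : FN N ≃+* FN N :=
  IsFractionRing.ringEquivOfRingEquiv (K := FN N) (L := FN N)
    (MvPolynomial.renameEquiv Kqt (Equiv.swap a b)).toRingEquiv

/-- The Demazure–Lusztig operator `T_i` (`1 ≤ i < N`), acting on `F` on the right:
`f·T_i = t f + ((t x_{i+1} − x_i)/(x_{i+1} − x_i)) (f∘s_i − f)`. -/
def Tdl (N : ℕ) (hN : 0 < N) (i : ℕ) (f : FN N) : FN N :=
  tF N * f +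
    ((tF N * XF (finCl N hN i) - XF (finCl N hN (i - 1))) /
      (XF (finCl N hN i) - XF (finCl N hN (i - 1)))) *
    (swapF N (finCl N hN (i - 1)) (finCl N hN i) f - f)

/-- `T_i^{−1} = t^{−1}(T_i + 1 − t)`. -/
def TopInv (N : ℕ) (hN : 0 < N) (i : ℕ) (f : FN N) : FN N :=
  (tF N)⁻¹ * (Tdl N hN i f + f - tF N * f)

/-- The algebra endomorphism `τ` of `ℚ(q,t)[x₁,…,x_N]`:
`f ↦ f(x_N/q, x₁, …, x_{N−1})`. -/
def tauPoly (N : ℕ) (hN : 0 < N) : PolyN N →ₐ[Kqt] PolyN N :=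
  aeval (fun i : Fin N =>
    if (i : ℕ) = 0 then C qk⁻¹ * X (finCl N hN (N - 1)) else X (finCl N hN ((i : ℕ) - 1)))

/-- The inverse of `τ`: `f ↦ f(x₂, …, x_N, q x₁)`. -/
def tauPolyInv (N : ℕ) (hN : 0 < N) : PolyN N →ₐ[Kqt] PolyN N :=
  aeval (fun i : Fin N =>
    if (i : ℕ) = N - 1 then C qk * X (finCl N hN 0) else X (finCl N hN ((i : ℕ) + 1)))


lemma qk_ne_zero : qk ≠ 0 := by
  simp only [qk, ne_eq, map_eq_zero_iff _ (IsFractionRing.injective Qqt Kqt)]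
  exact MvPolynomial.X_ne_zero 0

/-- `τ` as an automorphism of `ℚ(q,t)[x₁,…,x_N]`. -/
def tauEquiv (N : ℕ) (hN : 0 < N) : PolyN N ≃ₐ[Kqt] PolyN N :=
  AlgEquiv.ofAlgHom (tauPoly N hN) (tauPolyInv N hN)
    (by
      apply MvPolynomial.algHom_ext
      intro i
      simp only [AlgHom.comp_apply, AlgHom.id_apply, tauPoly, tauPolyInv, aeval_X]
      by_cases h : (i : ℕ) = N - 1
      · rw [if_pos h, map_mul, aeval_C, aeval_X, MvPolynomial.algebraMap_eq]
        have h0 : ((finCl N hN 0 : Fin N) : ℕ) = 0 := by simp [finCl]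
        rw [if_pos h0, ← mul_assoc, ← C_mul, mul_inv_cancel₀ qk_ne_zero, C_1, one_mul]
        congr 1
        apply Fin.ext
        simp only [finCl]
        omega
      · rw [if_neg h, aeval_X]
        have hlt : (i : ℕ) < N - 1 := by have := i.isLt; omega
        have h1 : ((finCl N hN ((i : ℕ) + 1) : Fin N) : ℕ) = (i : ℕ) + 1 := by
          simp [finCl]; omega
        rw [if_neg (by omega : ¬ ((finCl N hN ((i : ℕ) + 1) : Fin N) : ℕ) = 0)]
        congr 1
        apply Fin.ext
        simp only [finCl, h1]
        omega)
    (by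
      apply MvPolynomial.algHom_ext
      intro i
      simp only [AlgHom.comp_apply, AlgHom.id_apply, tauPoly, tauPolyInv, aeval_X]
      by_cases h : (i : ℕ) = 0
      · rw [if_pos h, map_mul, aeval_C, aeval_X, MvPolynomial.algebraMap_eq]
        have hh : ((finCl N hN (N - 1) : Fin N) : ℕ) = N - 1 := by simp [finCl]
        rw [if_pos hh, ← mul_assoc, ← C_mul, inv_mul_cancel₀ qk_ne_zero, C_1, one_mul]
        congr 1
        apply Fin.ext
        simp only [finCl]
        omega
      · rw [if_neg h, aeval_X]
        have hi := i.isLt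
        have hne : ¬ ((finCl N hN ((i : ℕ) - 1) : Fin N) : ℕ) = N - 1 := by
          simp only [finCl]; omega
        rw [if_neg hne]
        congr 1
        apply Fin.ext
        simp only [finCl]
        omega)

/-- `τ` as an automorphism of `F`. -/
def tauF (N : ℕ) (hN : 0 < N) : FN N ≃+* FN N :=
  IsFractionRing.ringEquivOfRingEquiv (K := FN N) (L := FN N) (tauEquiv N hN).toRingEquiv

/-- Apply the operators `A_{j}` for `j` running through the list `l`, left to right. -/
def chainOp {N : ℕ} (A : ℕ → FN N → FN N) (l : List ℕ) (f : FN N) : FN N :=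
  l.foldl (fun g j => A j g) f

/-- The Cherednik operator `ξ_i = t^{1−i} T_{i−1}⋯T_1 τ T_{N−1}^{−1}⋯T_i^{−1}`
(acting on the right, composing left-to-right). -/
def xiOp (N : ℕ) (hN : 0 < N) (i : ℕ) (f : FN N) : FN N :=
  ((tF N)⁻¹) ^ (i - 1) *
    chainOp (TopInv N hN) ((List.range' i (N - i)).reverse)
      (tauF N hN (chainOp (Tdl N hN) ((List.range' 1 (i - 1)).reverse) f))

/-- The `(q,t)`-Dunkl operators: `f·D_N = (f − f·ξ_N) x_N^{−1}` and
`D_i = t T_i^{−1} D_{i+1} T_i^{−1}`. -/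
def Dop (N : ℕ) (hN : 0 < N) : ℕ → FN N → FN N := fun i f =>
  if _h : i < N then
    tF N * TopInv N hN i (Dop N hN (i + 1) (TopInv N hN i f))
  else
    (f - xiOp N hN N f) * (XF (finCl N hN (N - 1)))⁻¹
termination_by i => N - i

/-- The Knop–Cherednik operator
`f·Ξ_i = t^{1−i} ((f·T_{i−1}⋯T_1 τ)·(1 − x_N^{−1}))·T_{N−1}^{−1}⋯T_i^{−1} + f·x_i^{−1}`. -/
def XiOp (N : ℕ) (hN : 0 < N) (i : ℕ) (f : FN N) : FN N :=
  ((tF N)⁻¹) ^ (i - 1) *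
    chainOp (TopInv N hN) ((List.range' i (N - i)).reverse)
      (tauF N hN (chainOp (Tdl N hN) ((List.range' 1 (i - 1)).reverse) f) *
        (1 - (XF (finCl N hN (N - 1)))⁻¹)) +
  f * (XF (finCl N hN (i - 1)))⁻¹


/-! ### Auxiliary lemmas -/

lemma tk_ne_zero : tk ≠ 0 := by
  simp only [tk, ne_eq, map_eq_zero_iff _ (IsFractionRing.injective Qqt Kqt)]
  exact MvPolynomial.X_ne_zero 1

lemma tF_ne_zero (N : ℕ) : tF N ≠ 0 := by
  simp only [tF, ne_eq, map_eq_zero_iff _ (IsFractionRing.injective (PolyN N) (FN N)),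
    MvPolynomial.C_eq_zero]
  exact tk_ne_zero

lemma XF_ne_zero {N : ℕ} (i : Fin N) : XF i ≠ 0 := by
  simp only [XF, ne_eq, map_eq_zero_iff _ (IsFractionRing.injective (PolyN N) (FN N))]
  exact MvPolynomial.X_ne_zero i

lemma XF_injective {N : ℕ} {a b : Fin N} (h : XF a = XF b) : a = b := by
  have := IsFractionRing.injective (PolyN N) (FN N) h
  exact MvPolynomial.X_injective this

lemma XF_sub_ne_zero {N : ℕ} {a b : Fin N} (h : a ≠ b) : XF a - XF b ≠ 0 := by
  intro hc
  exact h (XF_injective (sub_eq_zero.mp hc))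

lemma swapF_algebraMap (N : ℕ) (a b : Fin N) (p : PolyN N) :
    swapF N a b (algebraMap (PolyN N) (FN N) p) =
      algebraMap (PolyN N) (FN N) (rename (Equiv.swap a b) p) :=
  IsFractionRing.ringEquivOfRingEquiv_algebraMap _ p

lemma swapF_X (N : ℕ) (a b c : Fin N) :
    swapF N a b (XF c) = XF (Equiv.swap a b c) := by
  rw [XF, swapF_algebraMap, rename_X]; rfl

lemma swapF_C (N : ℕ) (a b : Fin N) (c : Kqt) :
    swapF N a b (algebraMap (PolyN N) (FN N) (C c)) = algebraMap (PolyN N) (FN N) (C c) := by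
  rw [swapF_algebraMap, rename_C]

lemma swapF_tF (N : ℕ) (a b : Fin N) : swapF N a b (tF N) = tF N := swapF_C N a b tk

lemma swapF_swapF (N : ℕ) (a b : Fin N) (f : FN N) :
    swapF N a b (swapF N a b f) = f := by
  have key : ((swapF N a b : FN N ≃+* FN N) : FN N →+* FN N).comp
      ((swapF N a b : FN N ≃+* FN N) : FN N →+* FN N) = RingHom.id (FN N) := by
    apply IsLocalization.ringHom_ext (nonZeroDivisors (PolyN N))
    refine RingHom.ext fun p => ?_
    simp only [RingHom.coe_comp, Function.comp_apply, RingHom.coe_coe, RingHom.id_apply,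
      swapF_algebraMap, rename_rename]
    have hcomp : ⇑(Equiv.swap a b) ∘ ⇑(Equiv.swap a b) = id := by
      ext x; simp [Equiv.swap_apply_self]
    rw [hcomp, rename_id, AlgHom.id_apply]
  exact RingHom.congr_fun key f

lemma swapF_tFinv_pow (N : ℕ) (a b : Fin N) (k : ℕ) :
    swapF N a b (((tF N)⁻¹) ^ k) = ((tF N)⁻¹) ^ k := by
  rw [map_pow, map_inv₀, swapF_tF]

lemma finCl_val (N : ℕ) (hN : 0 < N) (i : ℕ) (h : i ≤ N - 1) :
    ((finCl N hN i : Fin N) : ℕ) = i := by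
  simp only [finCl]; omega

lemma Tdl_sub (N : ℕ) (hN : 0 < N) (i : ℕ) (f g : FN N) :
    Tdl N hN i (f - g) = Tdl N hN i f - Tdl N hN i g := by
  simp only [Tdl, map_sub]; ring

lemma TopInv_sub (N : ℕ) (hN : 0 < N) (i : ℕ) (f g : FN N) :
    TopInv N hN i (f - g) = TopInv N hN i f - TopInv N hN i g := by
  simp only [TopInv, Tdl_sub]; ring

lemma Tdl_tpow_mul (N : ℕ) (hN : 0 < N) (i k : ℕ) (f : FN N) :
    Tdl N hN i (((tF N)⁻¹) ^ k * f) = ((tF N)⁻¹) ^ k * Tdl N hN i f := by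
  simp only [Tdl, map_mul, swapF_tFinv_pow]; ring

lemma TopInv_tpow_mul (N : ℕ) (hN : 0 < N) (i k : ℕ) (f : FN N) :
    TopInv N hN i (((tF N)⁻¹) ^ k * f) = ((tF N)⁻¹) ^ k * TopInv N hN i f := by
  simp only [TopInv, Tdl_tpow_mul]; ring

lemma chainOp_nil {N : ℕ} (A : ℕ → FN N → FN N) (f : FN N) : chainOp A [] f = f := rfl

lemma chainOp_cons {N : ℕ} (A : ℕ → FN N → FN N) (j : ℕ) (l : List ℕ) (f : FN N) :
    chainOp A (j :: l) f = chainOp A l (A j f) := rfl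

lemma chainOp_append {N : ℕ} (A : ℕ → FN N → FN N) (l₁ l₂ : List ℕ) (f : FN N) :
    chainOp A (l₁ ++ l₂) f = chainOp A l₂ (chainOp A l₁ f) := by
  simp [chainOp, List.foldl_append]

lemma chainOp_TopInv_sub (N : ℕ) (hN : 0 < N) (l : List ℕ) (f g : FN N) :
    chainOp (TopInv N hN) l (f - g) =
      chainOp (TopInv N hN) l f - chainOp (TopInv N hN) l g := by
  induction l generalizing f g with
  | nil => rfl
  | cons j l ih => rw [chainOp_cons, chainOp_cons, chainOp_cons, TopInv_sub, ih]

lemma chainOp_TopInv_tpow_mul (N : ℕ) (hN : 0 < N) (l : List ℕ) (k : ℕ) (f : FN N) :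
    chainOp (TopInv N hN) l (((tF N)⁻¹) ^ k * f) =
      ((tF N)⁻¹) ^ k * chainOp (TopInv N hN) l f := by
  induction l generalizing f with
  | nil => rfl
  | cons j l ih => rw [chainOp_cons, chainOp_cons, TopInv_tpow_mul, ih]

/-- The Hecke relation `T_i ∘ T_i⁻¹ = 1`. -/
lemma Tdl_TopInv (N : ℕ) (hN : 0 < N) (i : ℕ) (h1 : 1 ≤ i) (h2 : i ≤ N - 1) (f : FN N) :
    Tdl N hN i (TopInv N hN i f) = f := by
  have hvb : ((finCl N hN i : Fin N) : ℕ) = i := finCl_val N hN i h2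
  have hva : ((finCl N hN (i - 1) : Fin N) : ℕ) = i - 1 := finCl_val N hN (i - 1) (by omega)
  have hab : finCl N hN (i - 1) ≠ finCl N hN i := by
    intro hc
    rw [Fin.ext_iff, hva, hvb] at hc
    omega
  simp only [Tdl, TopInv]
  set a := finCl N hN (i - 1) with ha
  set b := finCl N hN i with hb
  set σ := swapF N a b with hσ
  have hσa : σ (XF a) = XF b := by rw [hσ, swapF_X, Equiv.swap_apply_left]
  have hσb : σ (XF b) = XF a := by rw [hσ, swapF_X, Equiv.swap_apply_right]
  have hσt : σ (tF N) = tF N := swapF_tF N a b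
  have hσσ : ∀ g, σ (σ g) = g := swapF_swapF N a b
  have hba : XF b - XF a ≠ 0 := XF_sub_ne_zero (Ne.symm hab)
  have hab' : XF a - XF b ≠ 0 := XF_sub_ne_zero hab
  have ht : tF N ≠ 0 := tF_ne_zero N
  simp only [map_mul, map_add, map_sub, map_div₀, map_inv₀, hσa, hσb, hσt, hσσ]
  simp only [div_eq_mul_inv]
  rw [show (XF a - XF b)⁻¹ = -(XF b - XF a)⁻¹ from
    inv_eq_of_mul_eq_one_right (by linear_combination mul_inv_cancel₀ hba)]
  have hw : (XF b - XF a) * (XF b - XF a)⁻¹ = 1 := mul_inv_cancel₀ hba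
  have hu : tF N * (tF N)⁻¹ = 1 := mul_inv_cancel₀ ht
  refine mul_left_cancel₀ (mul_ne_zero ht (pow_ne_zero 2 hba)) ?_
  linear_combination
    ((σ f) * (tF N) * (XF a) * (XF b)^2 * ((XF b - XF a)⁻¹) * ((tF N)⁻¹) + (-2 : FN N) * (σ f) * (tF N) * (XF a)^2 * (XF b) * ((XF b - XF a)⁻¹) * ((tF N)⁻¹) + (σ f) * (tF N) * (XF a)^3 * ((XF b - XF a)⁻¹) * ((tF N)⁻¹) + (-1 : FN N) * (σ f) * (tF N)^2 * (XF b)^3 * ((XF b - XF a)⁻¹) * ((tF N)⁻¹) + (3 : FN N) * (σ f) * (tF N)^2 * (XF a) * (XF b)^2 * ((XF b - XF a)⁻¹) * ((tF N)⁻¹) + (-3 : FN N) * (σ f) * (tF N)^2 * (XF a)^2 * (XF b) * ((XF b - XF a)⁻¹) * ((tF N)⁻¹) + (σ f) * (tF N)^2 * (XF a)^3 * ((XF b - XF a)⁻¹) * ((tF N)⁻¹) + (-1 : FN N) * (σ f) * (tF N)^3 * (XF b)^3 * ((XF b - XF a)⁻¹) * ((tF N)⁻¹) + (2 : FN N) *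 (σ f) * (tF N)^3 * (XF a) * (XF b)^2 * ((XF b - XF a)⁻¹) * ((tF N)⁻¹) + (-1 : FN N) * (σ f) * (tF N)^3 * (XF a)^2 * (XF b) * ((XF b - XF a)⁻¹) * ((tF N)⁻¹) + (-1 : FN N) * (f) * (tF N) * (XF a) * (XF b)^2 * ((XF b - XF a)⁻¹) * ((tF N)⁻¹) + (2 : FN N) * (f) * (tF N) * (XF a)^2 * (XF b) * ((XF b - XF a)⁻¹) * ((tF N)⁻¹) + (-1 : FN N) * (f) * (tF N) * (XF a)^3 * ((XF b - XF a)⁻¹) * ((tF N)⁻¹) + (f) * (tF N)^2 * (XF b)^3 * ((XF b - XF a)⁻¹) * ((tF N)⁻¹) + (-3 : FN N) * (f) * (tF N)^2 * (XF a) * (XF b)^2 * ((XF b - XF a)⁻¹) * ((tF N)⁻¹) + (3 : FN N) * (f) * (tF N)^2 * (XF a)^2 * (XF b) * ((XF b - XF a)⁻¹) * ((tF N)⁻¹) + (-1 : FN N) * (f) * (tF N)^2 * (XF a)^3 * ((XF b - XF a)⁻¹) * ((tF N)⁻¹) + (f) * (tF N)^3 * (XF b)^3 * ((XF b - XF a)⁻¹)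 * ((tF N)⁻¹) + (-2 : FN N) * (f) * (tF N)^3 * (XF a) * (XF b)^2 * ((XF b - XF a)⁻¹) * ((tF N)⁻¹) + (f) * (tF N)^3 * (XF a)^2 * (XF b) * ((XF b - XF a)⁻¹) * ((tF N)⁻¹)) * hw +
    ((f) * (tF N) * (XF b)^2 + (-2 : FN N) * (f) * (tF N) * (XF a) * (XF b) + (f) * (tF N) * (XF a)^2) * hu

set_option maxHeartbeats 8000000 in
/-- The key Hecke identity `t·T_i⁻¹(T_i⁻¹(f)·x_{i+1}⁻¹) = f·x_i⁻¹`. -/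
lemma key_D (N : ℕ) (hN : 0 < N) (i : ℕ) (h1 : 1 ≤ i) (h2 : i ≤ N - 1) (f : FN N) :
    tF N * TopInv N hN i (TopInv N hN i f * (XF (finCl N hN i))⁻¹) =
      f * (XF (finCl N hN (i - 1)))⁻¹ := by
  have hvb : ((finCl N hN i : Fin N) : ℕ) = i := finCl_val N hN i h2
  have hva : ((finCl N hN (i - 1) : Fin N) : ℕ) = i - 1 := finCl_val N hN (i - 1) (by omega)
  have hab : finCl N hN (i - 1) ≠ finCl N hN i := by
    intro hc
    rw [Fin.ext_iff, hva, hvb] at hc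
    omega
  simp only [Tdl, TopInv]
  set a := finCl N hN (i - 1) with ha
  set b := finCl N hN i with hb
  set σ := swapF N a b with hσ
  have hσa : σ (XF a) = XF b := by rw [hσ, swapF_X, Equiv.swap_apply_left]
  have hσb : σ (XF b) = XF a := by rw [hσ, swapF_X, Equiv.swap_apply_right]
  have hσt : σ (tF N) = tF N := swapF_tF N a b
  have hσσ : ∀ g, σ (σ g) = g := swapF_swapF N a b
  have hba : XF b - XF a ≠ 0 := XF_sub_ne_zero (Ne.symm hab)
  have hab' : XF a - XF b ≠ 0 := XF_sub_ne_zero hab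
  have ht : tF N ≠ 0 := tF_ne_zero N
  have hxa : XF a ≠ 0 := XF_ne_zero a
  have hxb : XF b ≠ 0 := XF_ne_zero b
  simp only [map_mul, map_add, map_sub, map_div₀, map_inv₀, hσa, hσb, hσt, hσσ]
  simp only [div_eq_mul_inv]
  rw [show (XF a - XF b)⁻¹ = -(XF b - XF a)⁻¹ from
    inv_eq_of_mul_eq_one_right (by linear_combination mul_inv_cancel₀ hba)]
  have hw : (XF b - XF a) * (XF b - XF a)⁻¹ = 1 := mul_inv_cancel₀ hba
  have hu : tF N * (tF N)⁻¹ = 1 := mul_inv_cancel₀ ht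
  have hia0 : XF a * (XF a)⁻¹ = 1 := mul_inv_cancel₀ hxa
  have hib0 : XF b * (XF b)⁻¹ = 1 := mul_inv_cancel₀ hxb
  refine mul_left_cancel₀ (mul_ne_zero (mul_ne_zero (mul_ne_zero (pow_ne_zero 2 ht) hxa) hxb)
    (pow_ne_zero 2 hba)) ?_
  linear_combination
    ((-1 : FN N) * (σ f) * (tF N)^3 * (XF a)^2 * (XF b)^2 * ((tF N)⁻¹)^2 * ((XF b)⁻¹) + (σ f) * (tF N)^3 * (XF a)^2 * (XF b)^3 * ((XF b - XF a)⁻¹) * ((tF N)⁻¹)^2 * ((XF a)⁻¹) + (σ f) * (tF N)^3 * (XF a)^3 * (XF b) * ((tF N)⁻¹)^2 * ((XF a)⁻¹) + (-1 : FN N) * (σ f) * (tF N)^3 * (XF a)^3 * (XF b)^2 * ((XF b - XF a)⁻¹) * ((tF N)⁻¹)^2 * ((XF b)⁻¹) + (-1 : FN N) * (σ f) * (tF N)^3 * (XF a)^3 * (XF b)^2 * ((XF b - XF a)⁻¹) * ((tF N)⁻¹)^2 * ((XF a)⁻¹) + (σ f) * (tF N)^3 * (XF a)^4 * (XF b) *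 ((XF b - XF a)⁻¹) * ((tF N)⁻¹)^2 * ((XF b)⁻¹) + (σ f) * (tF N)^4 * (XF a) * (XF b)^3 * ((tF N)⁻¹)^2 * ((XF b)⁻¹) + (-1 : FN N) * (σ f) * (tF N)^4 * (XF a) * (XF b)^4 * ((XF b - XF a)⁻¹) * ((tF N)⁻¹)^2 * ((XF a)⁻¹) + (σ f) * (tF N)^4 * (XF a)^2 * (XF b)^2 * ((tF N)⁻¹)^2 * ((XF b)⁻¹) + (-1 : FN N) * (σ f) * (tF N)^4 * (XF a)^2 * (XF b)^2 * ((tF N)⁻¹)^2 * ((XF a)⁻¹) + (2 : FN N) * (σ f) * (tF N)^4 * (XF a)^2 * (XF b)^3 * ((XF b - XF a)⁻¹) * ((tF N)⁻¹)^2 * ((XF b)⁻¹) + (σ f) * (tF N)^4 * (XF a)^2 * (XF b)^3 * ((XF b - XF a)⁻¹) * ((tF N)⁻¹)^2 * ((XF a)⁻¹) + (-1 : FN N) * (σ f) * (tF N)^4 * (XF a)^3 * (XF b) * ((tF N)⁻¹)^2 * ((XF a)⁻¹) + (-2 : FN N) * (σ f) * (tF N)^4 * (XF a)^3 * (XF b)^2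 * ((XF b - XF a)⁻¹) * ((tF N)⁻¹)^2 * ((XF b)⁻¹) + (-1 : FN N) * (σ f) * (tF N)^4 * (XF a)^3 * (XF b)^2 * ((XF b - XF a)⁻¹) * ((tF N)⁻¹)^2 * ((XF a)⁻¹) + (σ f) * (tF N)^4 * (XF a)^4 * (XF b) * ((XF b - XF a)⁻¹) * ((tF N)⁻¹)^2 * ((XF a)⁻¹) + (-1 : FN N) * (σ f) * (tF N)^5 * (XF a) * (XF b)^3 * ((tF N)⁻¹)^2 * ((XF b)⁻¹) + (-1 : FN N) * (σ f) * (tF N)^5 * (XF a) * (XF b)^4 * ((XF b - XF a)⁻¹) * ((tF N)⁻¹)^2 * ((XF b)⁻¹) + (σ f) * (tF N)^5 * (XF a)^2 * (XF b)^2 * ((tF N)⁻¹)^2 * ((XF a)⁻¹) + (σ f) * (tF N)^5 * (XF a)^2 * (XF b)^3 * ((XF b - XF a)⁻¹) * ((tF N)⁻¹)^2 * ((XF b)⁻¹) + (σ f) * (tF N)^5 * (XF a)^2 * (XF b)^3 * ((XF b - XF a)⁻¹) * ((tF N)⁻¹)^2 * ((XF a)⁻¹) + (-1 : FN N) * (σ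 f) * (tF N)^5 * (XF a)^3 * (XF b)^2 * ((XF b - XF a)⁻¹) * ((tF N)⁻¹)^2 * ((XF a)⁻¹) + (2 : FN N) * (f) * (tF N)^3 * (XF a)^2 * (XF b)^2 * ((tF N)⁻¹)^2 * ((XF b)⁻¹) + (-1 : FN N) * (f) * (tF N)^3 * (XF a)^2 * (XF b)^2 * ((tF N)⁻¹)^2 * ((XF a)⁻¹) + (-1 : FN N) * (f) * (tF N)^3 * (XF a)^2 * (XF b)^3 * ((XF b - XF a)⁻¹) * ((tF N)⁻¹)^2 * ((XF a)⁻¹) + (-1 : FN N) * (f) * (tF N)^3 * (XF a)^3 * (XF b) * ((tF N)⁻¹)^2 * ((XF b)⁻¹) + (f) * (tF N)^3 * (XF a)^3 * (XF b)^2 * ((XF b - XF a)⁻¹) * ((tF N)⁻¹)^2 * ((XF b)⁻¹) + (f) * (tF N)^3 * (XF a)^3 * (XF b)^2 * ((XF b - XF a)⁻¹) * ((tF N)⁻¹)^2 * ((XF a)⁻¹) + (-1 : FN N) * (f) * (tF N)^3 * (XF a)^4 * (XF b) * ((XF b - XF a)⁻¹) * ((tF N)⁻¹)^2 * ((XF b)⁻¹)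 + (-2 : FN N) * (f) * (tF N)^4 * (XF a) * (XF b)^3 * ((tF N)⁻¹)^2 * ((XF b)⁻¹) + (f) * (tF N)^4 * (XF a) * (XF b)^3 * ((tF N)⁻¹)^2 * ((XF a)⁻¹) + (f) * (tF N)^4 * (XF a) * (XF b)^4 * ((XF b - XF a)⁻¹) * ((tF N)⁻¹)^2 * ((XF a)⁻¹) + (-2 : FN N) * (f) * (tF N)^4 * (XF a)^2 * (XF b)^3 * ((XF b - XF a)⁻¹) * ((tF N)⁻¹)^2 * ((XF b)⁻¹) + (-1 : FN N) * (f) * (tF N)^4 * (XF a)^2 * (XF b)^3 * ((XF b - XF a)⁻¹) * ((tF N)⁻¹)^2 * ((XF a)⁻¹) + (f) * (tF N)^4 * (XF a)^3 * (XF b) * ((tF N)⁻¹)^2 * ((XF a)⁻¹) + (2 : FN N) * (f) * (tF N)^4 * (XF a)^3 * (XF b)^2 * ((XF b - XF a)⁻¹) * ((tF N)⁻¹)^2 * ((XF b)⁻¹) + (f) * (tF N)^4 * (XF a)^3 * (XF b)^2 * ((XF b - XF a)⁻¹) * ((tF N)⁻¹)^2 * ((XF a)⁻¹) + (-1 : FN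 N) * (f) * (tF N)^4 * (XF a)^4 * (XF b) * ((XF b - XF a)⁻¹) * ((tF N)⁻¹)^2 * ((XF a)⁻¹) + (f) * (tF N)^5 * (XF a) * (XF b)^3 * ((tF N)⁻¹)^2 * ((XF b)⁻¹) + (f) * (tF N)^5 * (XF a) * (XF b)^4 * ((XF b - XF a)⁻¹) * ((tF N)⁻¹)^2 * ((XF b)⁻¹) + (-1 : FN N) * (f) * (tF N)^5 * (XF a)^2 * (XF b)^2 * ((tF N)⁻¹)^2 * ((XF a)⁻¹) + (-1 : FN N) * (f) * (tF N)^5 * (XF a)^2 * (XF b)^3 * ((XF b - XF a)⁻¹) * ((tF N)⁻¹)^2 * ((XF b)⁻¹) + (-1 : FN N) * (f) * (tF N)^5 * (XF a)^2 * (XF b)^3 * ((XF b - XF a)⁻¹) * ((tF N)⁻¹)^2 * ((XF a)⁻¹) + (f) * (tF N)^5 * (XF a)^3 * (XF b)^2 * ((XF b - XF a)⁻¹) * ((tF N)⁻¹)^2 * ((XF a)⁻¹)) * hw +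
    ((-1 : FN N) * (σ f) * (tF N) * (XF a)^2 * (XF b)^2 * ((XF b)⁻¹) + (σ f) * (tF N) * (XF a)^3 * (XF b) * ((XF a)⁻¹) + (σ f) * (tF N)^2 * (XF a) * (XF b)^3 * ((XF b)⁻¹) + (σ f) * (tF N)^2 * (XF a)^2 * (XF b)^2 * ((XF b)⁻¹) + (-1 : FN N) * (σ f) * (tF N)^2 * (XF a)^2 * (XF b)^2 * ((XF a)⁻¹) + (-1 : FN N) * (σ f) * (tF N)^2 * (XF a)^2 * (XF b)^2 * ((tF N)⁻¹) * ((XF b)⁻¹) + (-1 : FN N) * (σ f) * (tF N)^2 * (XF a)^3 * (XF b) * ((XF a)⁻¹) + (σ f) * (tF N)^2 * (XF a)^3 * (XF b) * ((tF N)⁻¹) * ((XF a)⁻¹) + (-1 : FN N) * (σ f) * (tF N)^3 * (XF a) * (XF b)^3 * ((XF b)⁻¹) + (σ f) * (tF N)^3 * (XF a) * (XF b)^3 * ((tF N)⁻¹) * ((XF b)⁻¹) + (σ f) * (tF N)^3 * (XF a)^2 * (XF b)^2 * ((XF a)⁻¹) + (σ f) * (tF N)^3 * (XF a)^2 * (XF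 b)^2 * ((tF N)⁻¹) * ((XF b)⁻¹) + (-1 : FN N) * (σ f) * (tF N)^3 * (XF a)^2 * (XF b)^2 * ((tF N)⁻¹) * ((XF a)⁻¹) + (-1 : FN N) * (σ f) * (tF N)^3 * (XF a)^3 * (XF b) * ((tF N)⁻¹) * ((XF a)⁻¹) + (-1 : FN N) * (σ f) * (tF N)^4 * (XF a) * (XF b)^3 * ((tF N)⁻¹) * ((XF b)⁻¹) + (σ f) * (tF N)^4 * (XF a)^2 * (XF b)^2 * ((tF N)⁻¹) * ((XF a)⁻¹) + (f) * (tF N) * (XF a) * (XF b)^3 * ((XF b)⁻¹) + (-1 : FN N) * (f) * (tF N) * (XF a)^2 * (XF b)^2 * ((XF a)⁻¹) + (-2 : FN N) * (f) * (tF N)^2 * (XF a) * (XF b)^3 * ((XF b)⁻¹) + (f) * (tF N)^2 * (XF a) * (XF b)^3 * ((XF a)⁻¹) + (f) * (tF N)^2 * (XF a) * (XF b)^3 * ((tF N)⁻¹) * ((XF b)⁻¹) + (-1 : FN N) * (f) * (tF N)^2 * (XF a)^2 * (XF b)^2 * ((tF N)⁻¹) * ((XF a)⁻¹) + (f) * (tF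 N)^2 * (XF a)^3 * (XF b) * ((XF a)⁻¹) + (f) * (tF N)^3 * (XF a) * (XF b)^3 * ((XF b)⁻¹) + (-2 : FN N) * (f) * (tF N)^3 * (XF a) * (XF b)^3 * ((tF N)⁻¹) * ((XF b)⁻¹) + (f) * (tF N)^3 * (XF a) * (XF b)^3 * ((tF N)⁻¹) * ((XF a)⁻¹) + (-1 : FN N) * (f) * (tF N)^3 * (XF a)^2 * (XF b)^2 * ((XF a)⁻¹) + (f) * (tF N)^3 * (XF a)^3 * (XF b) * ((tF N)⁻¹) * ((XF a)⁻¹) + (f) * (tF N)^4 * (XF a) * (XF b)^3 * ((tF N)⁻¹) * ((XF b)⁻¹) + (-1 : FN N) * (f) * (tF N)^4 * (XF a)^2 * (XF b)^2 * ((tF N)⁻¹) * ((XF a)⁻¹)) * hu +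
    ((σ f) * (tF N) * (XF a)^2 * (XF b) + (-1 : FN N) * (σ f) * (tF N)^2 * (XF a) * (XF b)^2 + (-1 : FN N) * (σ f) * (tF N)^2 * (XF a)^2 * (XF b) + (σ f) * (tF N)^3 * (XF a) * (XF b)^2 + (-1 : FN N) * (f) * (tF N) * (XF a) * (XF b)^2 + (2 : FN N) * (f) * (tF N)^2 * (XF a) * (XF b)^2 + (-1 : FN N) * (f) * (tF N)^3 * (XF a) * (XF b)^2) * hia0 +
    ((-1 : FN N) * (σ f) * (tF N) * (XF a)^2 * (XF b) + (σ f) * (tF N)^2 * (XF a) * (XF b)^2 + (σ f) * (tF N)^2 * (XF a)^2 * (XF b) + (-1 : FN N) * (σ f) * (tF N)^3 * (XF a) * (XF b)^2 + (f) * (tF N) * (XF a) * (XF b)^2 + (-2 : FN N) * (f) * (tF N)^2 * (XF a) * (XF b)^2 + (f) * (tF N)^3 * (XF a) * (XF b)^2) * hib0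

/-- Closed form for the Dunkl operators. -/
lemma Dop_closed (N : ℕ) (hN : 0 < N) (i : ℕ) (h1 : 1 ≤ i) (h2 : i ≤ N) (f : FN N) :
    Dop N hN i f = f * (XF (finCl N hN (i - 1)))⁻¹ -
      ((tF N)⁻¹) ^ (i - 1) *
        chainOp (TopInv N hN) ((List.range' i (N - i)).reverse)
          (tauF N hN (chainOp (Tdl N hN) ((List.range' 1 (i - 1)).reverse) f) *
            (XF (finCl N hN (N - 1)))⁻¹) := by
  have key : ∀ k : ℕ, ∀ i : ℕ, 1 ≤ i → i ≤ N → N - i = k → ∀ f : FN N,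
      Dop N hN i f = f * (XF (finCl N hN (i - 1)))⁻¹ -
      ((tF N)⁻¹) ^ (i - 1) *
        chainOp (TopInv N hN) ((List.range' i (N - i)).reverse)
          (tauF N hN (chainOp (Tdl N hN) ((List.range' 1 (i - 1)).reverse) f) *
            (XF (finCl N hN (N - 1)))⁻¹) := by
    intro k
    induction k with
    | zero =>
      intro i hi1 hi2 hik f
      have hiN : i = N := by omega
      subst hiN
      rw [Dop]
      rw [dif_neg (lt_irrefl _)]
      simp only [Nat.sub_self, List.range'_zero, List.reverse_nil, chainOp_nil, xiOp]
      ring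
    | succ k ih =>
      intro i hi1 hi2 hik f
      have hiN : i < N := by omega
      rw [Dop, dif_pos hiN]
      rw [ih (i + 1) (by omega) (by omega) (by omega) (TopInv N hN i f)]
      have hT : chainOp (Tdl N hN) ((List.range' 1 (i + 1 - 1)).reverse) (TopInv N hN i f) =
          chainOp (Tdl N hN) ((List.range' 1 (i - 1)).reverse) f := by
        have h1' : i + 1 - 1 = (i - 1) + 1 := by omega
        rw [h1', List.range'_1_concat, List.reverse_append, List.reverse_singleton]
        have h2' : 1 + (i - 1) = i := by omega
        rw [h2']
        rw [List.singleton_append, chainOp_cons, Tdl_TopInv N hN i hi1 (by omega)]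
      rw [hT]
      have hfin : finCl N hN (i + 1 - 1) = finCl N hN i := by norm_num
      rw [hfin]
      rw [TopInv_sub, mul_sub]
      rw [key_D N hN i hi1 (by omega)]
      have hi1' : i + 1 - 1 = i := by omega
      rw [hi1']
      rw [TopInv_tpow_mul]
      have hchain : TopInv N hN i (chainOp (TopInv N hN) ((List.range' (i + 1) (N - (i + 1))).reverse)
          (tauF N hN (chainOp (Tdl N hN) ((List.range' 1 (i - 1)).reverse) f) *
            (XF (finCl N hN (N - 1)))⁻¹)) =
          chainOp (TopInv N hN) ((List.range' i (N - i)).reverse)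
            (tauF N hN (chainOp (Tdl N hN) ((List.range' 1 (i - 1)).reverse) f) *
              (XF (finCl N hN (N - 1)))⁻¹) := by
        have hr : N - i = (N - (i + 1)) + 1 := by omega
        rw [hr, List.range'_succ, List.reverse_cons, chainOp_append]
        rfl
      rw [← hchain]
      have ht : tF N ≠ 0 := tF_ne_zero N
      have hpow : tF N * ((tF N)⁻¹) ^ i = ((tF N)⁻¹) ^ (i - 1) := by
        have h : i = (i - 1) + 1 := by omega
        rw [h, pow_succ]
        field_simp
        simp
      congr 1
      rw [← mul_assoc, hpow]
  exact key (N - i) i h1 h2 rfl f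


/-- On the field `F = ℚ(q,t)(x₁,…,x_N)` the Knop–Cherednik operators
decompose as `Ξ_i = ξ_i + D_i` for every `1 ≤ i ≤ N`. -/
theorem knop_cherednik_eq_cherednik_add_dunkl
    (N : ℕ) (hN : 2 ≤ N) (i : ℕ) (hi1 : 1 ≤ i) (hiN : i ≤ N) (f : FN N) :
    XiOp N (by omega) i f = xiOp N (by omega) i f + Dop N (by omega) i f := by
  rw [XiOp, xiOp, Dop_closed N (by omega) i hi1 hiN f]
  rw [mul_one_sub, chainOp_TopInv_sub]
  ring

end
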